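/- Let Y be a compact metric space, let μ be a Borel probability measure on Y with full support, let c > 0, and let k be a map assigning to each y ∈ Y a Borel probability measure k(y, ·) on Y such that k(y, A) ≥ c·μ(A) for every y ∈ Y and every Borel set A ⊆ Y. If a : Y → ℝ is continuous and not constant, then sup_{y ∈ Y} |∫_Y a(y') k(y, dy')| < sup_{y ∈ Y} |a(y)|; that is, averaging against a kernel uniformly bounded below by a full-support measure strictly decreases the supremum norm of every non-constant continuous function. -/

import Mathlib

open MeasureTheory
open scoped ENNReal

lemma aux_int_lt {Y : Type*} [MetricSpace Y] [CompactSpace Y]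
    [MeasurableSpace Y] [BorelSpace Y]
    (μ : Measure Y) [IsProbabilityMeasure μ]
    (hfull : ∀ U : Set Y, IsOpen U → U.Nonempty → 0 < μ U)
    (a : Y → ℝ) (ha : Continuous a) (M : ℝ) (hle : ∀ y, a y ≤ M)
    (hlt : ∃ y, a y < M) : ∫ y, a y ∂μ < M := by
  have hai : Integrable a μ :=
    ha.integrable_of_hasCompactSupport (HasCompactSupport.of_compactSpace a)
  have hMi : Integrable (fun _ : Y => M) μ := integrable_const M
  have hpos : 0 < ∫ y, (M - a y) ∂μ := by
    rw [integral_pos_iff_support_of_nonneg (fun y => sub_nonneg.2 (hle y)) (hMi.sub hai)]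
    obtain ⟨y₁, hy₁⟩ := hlt
    have hU : IsOpen {y | a y < M} := isOpen_lt ha continuous_const
    refine lt_of_lt_of_le (hfull _ hU ⟨y₁, hy₁⟩) (measure_mono ?_)
    intro y hy
    simp only [Function.mem_support]
    exact ne_of_gt (sub_pos.2 hy)
  have heq : ∫ y, (M - a y) ∂μ = M - ∫ y, a y ∂μ := by
    rw [integral_sub hMi hai, integral_const]
    simp
  linarith [heq ▸ hpos]

/-- averaging against a Markov kernel `k` that is uniformly bounded below
by `c·μ` for a fully supported probability measure `μ` on a compact metric space strictly
decreases the supremum norm of every non-constant continuous function: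
`sup_y |∫ a dk(y, ·)| < sup_y |a y|`. -/
theorem stmt14 {Y : Type*} [MetricSpace Y] [CompactSpace Y]
    [MeasurableSpace Y] [BorelSpace Y]
    (μ : Measure Y) [IsProbabilityMeasure μ]
    (hfull : ∀ U : Set Y, IsOpen U → U.Nonempty → 0 < μ U)
    (c : ℝ) (hc : 0 < c)
    (k : Y → Measure Y) (hk : ∀ y, IsProbabilityMeasure (k y))
    (hlow : ∀ y : Y, ∀ A : Set Y, MeasurableSet A → ENNReal.ofReal c * μ A ≤ k y A)
    (a : Y → ℝ) (ha : Continuous a) (hnc : ∃ y y', a y ≠ a y') :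
    (⨆ y : Y, |∫ y', a y' ∂(k y)|) < ⨆ y : Y, |a y| := by
  obtain ⟨yy, yy', hyy⟩ := hnc
  have hne : Nonempty Y := ⟨yy⟩
  obtain ⟨y₀, -, hy₀⟩ := IsCompact.exists_isMaxOn isCompact_univ ⟨yy, trivial⟩
    ((ha.abs).continuousOn : ContinuousOn (fun y => |a y|) Set.univ)
  have hbd : ∀ y, |a y| ≤ |a y₀| := fun y => hy₀ (Set.mem_univ y)
  set M : ℝ := |a y₀| with hM
  have hMsup : (⨆ y : Y, |a y|) = M :=
    le_antisymm (ciSup_le hbd) (le_ciSup ⟨M, Set.forall_mem_range.2 hbd⟩ y₀)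
  have hMpos : 0 < M := by
    by_contra h
    push_neg at h
    have h0 : ∀ y, a y = 0 := fun y =>
      abs_eq_zero.1 (le_antisymm (le_trans (hbd y) h) (abs_nonneg _))
    exact hyy ((h0 yy).trans (h0 yy').symm)
  haveI := hk yy
  have hc1 : c ≤ 1 := by
    have h := hlow yy Set.univ MeasurableSet.univ
    simp only [measure_univ, mul_one] at h
    exact ENNReal.ofReal_le_one.1 h
  -- |∫ a dμ| < M
  have haM : ∀ y, a y ≤ M := fun y => le_trans (le_abs_self _) (hbd y)
  have hnaM : ∀ y, -a y ≤ M := fun y => le_trans (neg_le_abs _) (hbd y)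
  have hex : ∃ y, a y < M := by
    by_contra h
    push_neg at h
    exact hyy (((le_antisymm (haM yy) (h yy)).trans (le_antisymm (haM yy') (h yy')).symm))
  have hexn : ∃ y, -a y < M := by
    by_contra h
    push_neg at h
    have e : ∀ y, a y = -M := fun y => by linarith [hnaM y, h y]
    exact hyy ((e yy).trans (e yy').symm)
  have h1 : ∫ y, a y ∂μ < M := aux_int_lt μ hfull a ha M haM hex
  have h2 : ∫ y, -a y ∂μ < M := aux_int_lt μ hfull (fun y => -a y) ha.neg M hnaM hexn
  have h2' : -∫ y, a y ∂μ < M := by rwa [integral_neg] at h2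
  set I : ℝ := ∫ y, a y ∂μ with hIdef
  have hI : |I| < M := abs_lt.2 ⟨by linarith, h1⟩
  -- key pointwise bound
  have key : ∀ y, |∫ y', a y' ∂(k y)| ≤ (1 - c) * M + c * |I| := by
    intro y
    haveI := hk y
    haveI hfin : IsFiniteMeasure ((ENNReal.ofReal c) • μ) := by
      constructor
      simp [Measure.smul_apply, measure_univ]
    set ν : Measure Y := k y - (ENNReal.ofReal c) • μ with hν
    have hsle : (ENNReal.ofReal c) • μ ≤ k y := by
      rw [Measure.le_iff]
      intro s hs
      simpa [Measure.smul_apply, smul_eq_mul] using hlow y s hs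
    have hdec : k y = ν + (ENNReal.ofReal c) • μ :=
      (Measure.sub_add_cancel_of_le hsle).symm
    have hintν : Integrable a ν :=
      ha.integrable_of_hasCompactSupport (HasCompactSupport.of_compactSpace a)
    have hintc : Integrable a ((ENNReal.ofReal c) • μ) :=
      ha.integrable_of_hasCompactSupport (HasCompactSupport.of_compactSpace a)
    have hsplit : ∫ y', a y' ∂(k y) = (∫ y', a y' ∂ν) + c * I := by
      conv_lhs => rw [hdec]
      rw [integral_add_measure hintν hintc, integral_smul_measure,
        ENNReal.toReal_ofReal hc.le, smul_eq_mul]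
    have hνuniv : (ν Set.univ).toReal = 1 - c := by
      rw [Measure.sub_apply MeasurableSet.univ hsle]
      simp only [Measure.smul_apply, measure_univ, smul_eq_mul, mul_one]
      rw [ENNReal.toReal_sub_of_le (by exact_mod_cast ENNReal.ofReal_le_one.2 hc1)
        ENNReal.one_ne_top]
      simp [ENNReal.toReal_ofReal hc.le]
    have hbound : |∫ y', a y' ∂ν| ≤ M * (1 - c) := by
      have := norm_integral_le_of_norm_le_const (μ := ν) (f := a) (C := M)
        (Filter.Eventually.of_forall (fun x => by
          simpa [Real.norm_eq_abs] using hbd x))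
      rwa [Real.norm_eq_abs, show ν.real Set.univ = 1 - c from hνuniv] at this
    calc |∫ y', a y' ∂(k y)| = |(∫ y', a y' ∂ν) + c * I| := by rw [hsplit]
      _ ≤ |∫ y', a y' ∂ν| + |c * I| := abs_add_le _ _
      _ ≤ M * (1 - c) + c * |I| := by
          rw [abs_mul, abs_of_pos hc]
          exact add_le_add_left hbound _
      _ = (1 - c) * M + c * |I| := by ring
  rw [hMsup]
  refine lt_of_le_of_lt (ciSup_le key) ?_
  nlinarith [hI, hc, hMpos]
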